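/- Let g : 𝔻 → ℂ be a starlike univalent function normalized by g(0) = 0, g'(0) = 1, with g(z) = z + Σ_{n≥2} g_n z^n. Then |g_n| ≤ n for all n ≥ 2. -/

import Mathlib

open Metric

noncomputable def majorant (a : ℕ → ℂ) (r : ℝ) : ENNReal :=
  ∑' n, (‖a n‖₊ : ENNReal) * (ENNReal.ofReal r) ^ n

open Complex MeasureTheory intervalIntegral Real Filter ENNReal NNReal

/-- Summability of coefficients times r^n inside the disk. -/
lemma summable_aux {a : ℕ → ℂ} {f : ℂ → ℂ}
    (h : ∀ z ∈ ball (0:ℂ) 1, HasSum (fun n => a n * z ^ n) (f z))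
    {r : ℝ} (hr0 : 0 ≤ r) (hr1 : r < 1) :
    Summable (fun n => ‖a n‖ * r ^ n) := by
  set ρ : ℝ := (r + 1) / 2 with hρ
  have hρ0 : 0 < ρ := by positivity
  have hrρ : r < ρ := by rw [hρ]; linarith
  have hρ1 : ρ < 1 := by rw [hρ]; linarith
  have hz : (ρ : ℂ) ∈ ball (0:ℂ) 1 := by
    simp [Complex.norm_of_nonneg hρ0.le, abs_of_pos hρ0, hρ1, Complex.dist_eq]
  have hs : Summable (fun n => a n * (ρ:ℂ) ^ n) := (h _ hz).summable
  have ht : Filter.Tendsto (fun n => ‖a n * (ρ:ℂ) ^ n‖) Filter.atTop (nhds 0) := by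
    simpa using hs.tendsto_atTop_zero.norm
  obtain ⟨C, hC⟩ := ht.bddAbove_range
  have hC' : ∀ n, ‖a n‖ * ρ ^ n ≤ C := by
    intro n
    have := hC ⟨n, rfl⟩
    simpa [norm_mul, norm_pow, Complex.norm_real, abs_of_pos hρ0] using this
  have hgeo : Summable (fun n : ℕ => C * (r / ρ) ^ n) :=
    (summable_geometric_of_lt_one (by positivity) (by rw [div_lt_one hρ0]; exact hrρ)).mul_left C
  refine hgeo.of_nonneg_of_le (fun n => by positivity) (fun n => ?_)
  have : ‖a n‖ * r ^ n = (‖a n‖ * ρ ^ n) * (r / ρ) ^ n := by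
    rw [mul_assoc, ← mul_pow, mul_div_assoc', mul_div_cancel_left₀ r hρ0.ne']
  rw [this]
  exact mul_le_mul_of_nonneg_right (hC' n) (by positivity)

lemma circleInt_zpow {r : ℝ} (hr0 : 0 < r) (j : ℤ) :
    (∮ z in C((0:ℂ), r), z ^ j) = if j = -1 then (2 * π * I) else 0 := by
  split_ifs with hj
  · subst hj
    have := circleIntegral.integral_sub_center_inv (0:ℂ) (R := r) hr0.ne'
    simpa [zpow_neg_one] using this
  · have := circleIntegral.integral_sub_zpow_of_ne hj (0:ℂ) (0:ℂ) r
    simpa using this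

lemma circleInt_rep {a : ℕ → ℂ} {f : ℂ → ℂ}
    (h : ∀ z ∈ ball (0:ℂ) 1, HasSum (fun k => a k * z ^ k) (f z))
    (hsum : ∀ s : ℝ, 0 ≤ s → s < 1 → Summable (fun n => ‖a n‖ * s ^ n))
    {r : ℝ} (hr0 : 0 < r) (hr1 : r < 1) (m : ℤ) :
    (∮ z in C((0:ℂ), r), f z * z ^ m)
      = ∑' k : ℕ, a k * (if (k : ℤ) + m = -1 then (2 * π * I) else 0) := by
  set cm : ℝ → ℂ := circleMap 0 r with hcm
  have hcmem : ∀ θ, cm θ ∈ ball (0:ℂ) 1 := by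
    intro θ
    simp [hcm, Complex.dist_eq, norm_circleMap_zero, abs_of_pos hr0, hr1, mem_ball]
  have hcnorm : ∀ θ, ‖cm θ‖ = r := by
    intro θ; simp [hcm, norm_circleMap_zero, abs_of_pos hr0]
  have hcne : ∀ θ, cm θ ≠ 0 := by
    intro θ h0
    have := hcnorm θ; rw [h0] at this; simp at this; linarith
  set d : ℝ → ℂ := fun θ => deriv (circleMap 0 r) θ with hd
  have hdnorm : ∀ θ, ‖d θ‖ = r := by
    intro θ
    simp [hd, deriv_circleMap, norm_circleMap_zero, abs_of_pos hr0]
  set F : ℕ → ℝ → ℂ := fun k θ => d θ • (a k * cm θ ^ k * cm θ ^ m) with hF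
  have hFsum : ∀ θ, HasSum (fun k => F k θ) (d θ • (f (cm θ) * cm θ ^ m)) := by
    intro θ
    have h1 := ((h _ (hcmem θ)).mul_right (cm θ ^ m)).mul_left (d θ)
    simpa [hF, smul_eq_mul, mul_assoc] using h1
  have hnorm : ∀ k θ, ‖F k θ‖ = r * (‖a k‖ * r ^ k) * r ^ m := by
    intro k θ
    simp only [hF, norm_smul, norm_mul, norm_pow, norm_zpow, hcnorm, hdnorm]
    ring
  have hcont : ∀ k, Continuous (F k) := by
    intro k
    show Continuous (fun θ => d θ • (a k * cm θ ^ k * cm θ ^ m))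
    refine Continuous.fun_smul ?_ (Continuous.mul ((continuous_const : Continuous fun _ : ℝ => a k).mul ?_) ?_)
    · simp only [hd]
      have : (fun θ => deriv (circleMap 0 r) θ) = fun θ => circleMap 0 r θ * I := by
        funext θ; exact deriv_circleMap 0 r θ
      rw [this]; exact (continuous_circleMap 0 r).mul continuous_const
    · exact (continuous_circleMap 0 r).pow k
    · exact Continuous.zpow₀ (continuous_circleMap 0 r) m (fun θ => Or.inl (hcne θ))
  have hb : Summable (fun k => r * (‖a k‖ * r ^ k) * r ^ m) := by
    have := hsum r hr0.le hr1
    simpa [mul_comm, mul_assoc, mul_left_comm] using (this.mul_left r).mul_right (r ^ m)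
  have key : (∫ θ in Set.Ioc (0:ℝ) (2 * π), (d θ • (f (cm θ) * cm θ ^ m))) =
      ∑' k, ∫ θ in Set.Ioc (0:ℝ) (2 * π), F k θ := by
    rw [show (fun θ => d θ • (f (cm θ) * cm θ ^ m)) = fun θ => ∑' k, F k θ from
      funext fun θ => (hFsum θ).tsum_eq.symm]
    refine MeasureTheory.integral_tsum (fun k => (hcont k).aestronglyMeasurable) ?_
    have hlin : ∀ k, (∫⁻ θ in Set.Ioc (0:ℝ) (2 * π), ‖F k θ‖ₑ) =
        ENNReal.ofReal (r * (‖a k‖ * r ^ k) * r ^ m) * ENNReal.ofReal (2 * π) := by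
      intro k
      have : (fun θ => (‖F k θ‖ₑ : ℝ≥0∞)) =
          fun _ => ENNReal.ofReal (r * (‖a k‖ * r ^ k) * r ^ m) := by
        funext θ; rw [← ofReal_norm, hnorm]
      rw [this, MeasureTheory.setLIntegral_const, Real.volume_Ioc]
      norm_num
    rw [tsum_congr hlin, ENNReal.tsum_mul_right,
      ← ENNReal.ofReal_tsum_of_nonneg (fun k => by positivity) hb]
    exact ENNReal.mul_ne_top ENNReal.ofReal_ne_top ENNReal.ofReal_ne_top
  have h2π : (0:ℝ) ≤ 2 * π := by positivity
  have lhs_eq : (∮ z in C((0:ℂ), r), f z * z ^ m) =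
      ∫ θ in Set.Ioc (0:ℝ) (2 * π), (d θ • (f (cm θ) * cm θ ^ m)) := by
    rw [circleIntegral, intervalIntegral.integral_of_le h2π]
  rw [lhs_eq, key]
  refine tsum_congr fun k => ?_
  have hFk : ∀ θ, F k θ = a k * (d θ • (cm θ ^ ((k:ℤ) + m))) := by
    intro θ
    simp only [hF, smul_eq_mul, zpow_add₀ (hcne θ), zpow_natCast]
    ring
  rw [show (fun θ => F k θ) = fun θ => a k * (d θ • (cm θ ^ ((k:ℤ) + m))) from funext hFk]
  rw [MeasureTheory.integral_const_mul, ← intervalIntegral.integral_of_le h2π]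
  have : (∫ θ in (0:ℝ)..(2*π), d θ • (cm θ ^ ((k:ℤ) + m))) = ∮ z in C((0:ℂ), r), z ^ ((k:ℤ)+m) := rfl
  rw [this, circleInt_zpow hr0]

/-- Negative-exponent case: extracts coefficient `a n`. -/
lemma circleInt_coeff {a : ℕ → ℂ} {f : ℂ → ℂ}
    (h : ∀ z ∈ ball (0:ℂ) 1, HasSum (fun k => a k * z ^ k) (f z))
    (hsum : ∀ s : ℝ, 0 ≤ s → s < 1 → Summable (fun n => ‖a n‖ * s ^ n))
    {r : ℝ} (hr0 : 0 < r) (hr1 : r < 1) (n : ℕ) :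
    (∮ z in C((0:ℂ), r), f z * z ^ (-(n:ℤ) - 1)) = (2 * π * I) * a n := by
  rw [circleInt_rep h hsum hr0 hr1]
  rw [tsum_eq_single n]
  · have hyes : ((n:ℤ) + (-(n:ℤ) - 1) = -1) := by ring
    rw [if_pos hyes, mul_comm]
  · intro k hk
    have : ¬((k:ℤ) + (-(n:ℤ) - 1) = -1) := by omega
    simp [this]

/-- Nonnegative-exponent case: integral vanishes. -/
lemma circleInt_coeff_zero {a : ℕ → ℂ} {f : ℂ → ℂ}
    (h : ∀ z ∈ ball (0:ℂ) 1, HasSum (fun k => a k * z ^ k) (f z))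
    (hsum : ∀ s : ℝ, 0 ≤ s → s < 1 → Summable (fun n => ‖a n‖ * s ^ n))
    {r : ℝ} (hr0 : 0 < r) (hr1 : r < 1) (n : ℕ) :
    (∮ z in C((0:ℂ), r), f z * z ^ (n:ℤ)) = 0 := by
  rw [circleInt_rep h hsum hr0 hr1]
  convert tsum_zero with k
  have : ¬((k:ℤ) + (n:ℤ) = -1) := by omega
  simp [this]

/-- A function differentiable on the unit ball has a power series representation there. -/
lemma exists_rep {q : ℂ → ℂ} (hq : DifferentiableOn ℂ q (ball (0:ℂ) 1)) :
    ∃ qc : ℕ → ℂ, ∀ z ∈ ball (0:ℂ) 1, HasSum (fun n => qc n * z ^ n) (q z) := by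
  have hsub : ∀ t : ℝ≥0, (t:ℝ) < 1 → DifferentiableOn ℂ q (closedBall (0:ℂ) t) := by
    intro t ht
    refine hq.mono fun w hw => ?_
    rw [mem_closedBall_zero_iff] at hw
    rw [mem_ball_zero_iff]
    exact lt_of_le_of_lt hw ht
  have hps : ∀ t : ℝ≥0, 0 < t → (t:ℝ) < 1 →
      HasFPowerSeriesOnBall q (cauchyPowerSeries q 0 t) 0 t := fun t ht0 ht1 =>
    (hsub t ht1).hasFPowerSeriesOnBall ht0
  have h2 : HasFPowerSeriesOnBall q (cauchyPowerSeries q 0 (2⁻¹:ℝ≥0)) 0 (2⁻¹:ℝ≥0) :=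
    hps _ (by norm_num) (by norm_num)
  refine ⟨(cauchyPowerSeries q 0 ((2⁻¹:ℝ≥0):ℝ)).coeff, fun z hz => ?_⟩
  rw [mem_ball_zero_iff] at hz
  set t : ℝ≥0 := ⟨(‖z‖ + 1) / 2, by positivity⟩ with ht
  have ht1 : (t:ℝ) < 1 := by
    show (‖z‖ + 1) / 2 < 1
    linarith
  have ht0 : 0 < t := by
    rw [← NNReal.coe_lt_coe]
    show (0:ℝ) < (‖z‖ + 1) / 2
    positivity
  have hzt : ‖z‖ < (t:ℝ) := by
    show ‖z‖ < (‖z‖ + 1) / 2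
    linarith
  have h1 : HasFPowerSeriesOnBall q (cauchyPowerSeries q 0 t) 0 t := hps t ht0 ht1
  have heq : cauchyPowerSeries q 0 (t:ℝ) = cauchyPowerSeries q 0 ((2⁻¹:ℝ≥0):ℝ) :=
    h1.hasFPowerSeriesAt.eq_formalMultilinearSeries h2.hasFPowerSeriesAt
  have hmem : z ∈ Metric.eball (0:ℂ) t := by
    rw [Metric.mem_eball, edist_zero_right]
    exact_mod_cast hzt
  have hs := h1.hasSum hmem
  rw [zero_add] at hs
  refine HasSum.congr_fun hs fun n => ?_
  rw [FormalMultilinearSeries.apply_eq_pow_smul_coeff, heq, smul_eq_mul, mul_comm]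

lemma rep_coeff_zero {a : ℕ → ℂ} {f : ℂ → ℂ}
    (h : ∀ z ∈ ball (0:ℂ) 1, HasSum (fun n => a n * z ^ n) (f z)) : a 0 = f 0 := by
  have h0 := h 0 (by simp)
  have heq : (fun n : ℕ => a n * (0:ℂ) ^ n) = fun n => if n = 0 then a 0 else 0 := by
    funext n
    rcases Nat.eq_zero_or_pos n with rfl | hn
    · simp
    · simp [zero_pow hn.ne', hn.ne']
  rw [heq] at h0
  exact (hasSum_ite_eq 0 (a 0)).unique h0

lemma rep_mul {a b : ℕ → ℂ} {f g : ℂ → ℂ}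
    (ha : ∀ z ∈ ball (0:ℂ) 1, HasSum (fun n => a n * z ^ n) (f z))
    (hb : ∀ z ∈ ball (0:ℂ) 1, HasSum (fun n => b n * z ^ n) (g z)) :
    ∀ z ∈ ball (0:ℂ) 1, HasSum
      (fun n => (∑ kl ∈ Finset.HasAntidiagonal.antidiagonal n, a kl.1 * b kl.2) * z ^ n) (f z * g z) := by
  intro z hz
  rw [mem_ball_zero_iff] at hz
  set A : ℕ → ℂ := fun k => a k * z ^ k with hA
  set B : ℕ → ℂ := fun k => b k * z ^ k with hB
  have hnA : Summable fun k => ‖A k‖ := by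
    have := summable_aux ha (norm_nonneg z) hz
    simpa [hA, norm_mul, norm_pow] using this
  have hnB : Summable fun k => ‖B k‖ := by
    have := summable_aux hb (norm_nonneg z) hz
    simpa [hB, norm_mul, norm_pow] using this
  have hterm : ∀ n, (∑ kl ∈ Finset.HasAntidiagonal.antidiagonal n, a kl.1 * b kl.2) * z ^ n
      = ∑ kl ∈ Finset.HasAntidiagonal.antidiagonal n, A kl.1 * B kl.2 := by
    intro n
    rw [Finset.sum_mul]
    refine Finset.sum_congr rfl fun kl hkl => ?_
    rw [Finset.HasAntidiagonal.mem_antidiagonal] at hkl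
    simp only [hA, hB]
    rw [← hkl, pow_add]
    ring
  have hsum2 : Summable fun n => ∑ kl ∈ Finset.HasAntidiagonal.antidiagonal n, A kl.1 * B kl.2 :=
    (summable_norm_sum_mul_antidiagonal_of_summable_norm hnA hnB).of_norm
  have htsum : ((∑' n, A n) * ∑' n, B n) = ∑' n, ∑ kl ∈ Finset.HasAntidiagonal.antidiagonal n, A kl.1 * B kl.2 :=
    tsum_mul_tsum_eq_tsum_sum_antidiagonal_of_summable_norm hnA hnB
  have hz' : z ∈ ball (0:ℂ) 1 := by rwa [mem_ball_zero_iff]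
  rw [(ha z hz').tsum_eq, (hb z hz').tsum_eq] at htsum
  have := (hsum2.hasSum_iff).mpr htsum.symm
  refine HasSum.congr_fun this fun n => hterm n

lemma coeff_recursion {g q : ℂ → ℂ} {gc qc : ℕ → ℂ}
    (hg : DifferentiableOn ℂ g (ball 0 1))
    (hgc : ∀ z ∈ ball (0:ℂ) 1, HasSum (fun n => gc n * z ^ n) (g z))
    (hqc : ∀ z ∈ ball (0:ℂ) 1, HasSum (fun n => qc n * z ^ n) (q z))
    (hstar : ∀ z ∈ ball (0:ℂ) 1, z * deriv g z = q z * g z) (n : ℕ) :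
    (n : ℂ) * gc n = ∑ kl ∈ Finset.HasAntidiagonal.antidiagonal n, qc kl.1 * gc kl.2 := by
  set r : ℝ := 1/2 with hr
  have hr0 : (0:ℝ) < r := by norm_num
  have hr1 : r < 1 := by norm_num
  have hsphere : sphere (0:ℂ) r ⊆ ball (0:ℂ) 1 := fun z hz => by
    rw [mem_sphere_zero_iff_norm] at hz
    rw [mem_ball_zero_iff, hz]; norm_num
  have hzne : ∀ z ∈ sphere (0:ℂ) r, z ≠ 0 := fun z hz h0 => by
    rw [mem_sphere_zero_iff_norm, h0] at hz; simp at hz; linarith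
  -- the product representation
  have hprod := rep_mul hqc hgc
  -- RHS integral
  have hRHS : (∮ z in C((0:ℂ), r), (q z * g z) * z ^ (-(n:ℤ) - 1))
      = (2 * π * I) * ∑ kl ∈ Finset.HasAntidiagonal.antidiagonal n, qc kl.1 * gc kl.2 :=
    circleInt_coeff hprod (fun s hs0 hs1 => summable_aux hprod hs0 hs1) hr0 hr1 n
  -- rewrite integrand via hstar
  have hcongr1 : (∮ z in C((0:ℂ), r), (q z * g z) * z ^ (-(n:ℤ) - 1))
      = ∮ z in C((0:ℂ), r), deriv g z * z ^ (-(n:ℤ)) := by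
    refine circleIntegral.integral_congr hr0.le fun z hz => ?_
    have h1 := (hstar z (hsphere hz)).symm
    have hz0 := hzne z hz
    calc q z * g z * z ^ (-(n:ℤ) - 1) = (z * deriv g z) * z ^ (-(n:ℤ) - 1) := by rw [h1]
    _ = deriv g z * (z ^ (-(n:ℤ) - 1) * z ^ (1:ℤ)) := by rw [zpow_one]; ring
    _ = deriv g z * z ^ (-(n:ℤ)) := by rw [← zpow_add₀ hz0]; norm_num
  -- continuity facts
  have hganal : AnalyticOnNhd ℂ g (ball (0:ℂ) 1) := hg.analyticOnNhd isOpen_ball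
  have hg' : ContinuousOn (deriv g) (ball (0:ℂ) 1) :=
    (hganal.deriv).continuousOn
  have hgcont : ContinuousOn g (ball (0:ℂ) 1) := hg.continuousOn
  have hzpowcont : ∀ m : ℤ, ContinuousOn (fun z : ℂ => z ^ m) (sphere (0:ℂ) r) := by
    intro m
    exact ContinuousOn.zpow₀ continuousOn_id m (fun z hz => Or.inl (hzne z hz))
  have hInt1 : CircleIntegrable (fun z => deriv g z * z ^ (-(n:ℤ))) 0 r :=
    ContinuousOn.circleIntegrable hr0.le
      (((hg'.mono hsphere)).mul (hzpowcont _))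
  have hInt2 : CircleIntegrable (fun z => (n:ℂ) * (g z * z ^ (-(n:ℤ) - 1))) 0 r :=
    ContinuousOn.circleIntegrable hr0.le
      (continuousOn_const.mul ((hgcont.mono hsphere).mul (hzpowcont _)))
  -- integration by parts: the derivative of g z * z ^ (-n) integrates to zero
  have hparts : (∮ z in C((0:ℂ), r),
      (deriv g z * z ^ (-(n:ℤ)) - (n:ℂ) * (g z * z ^ (-(n:ℤ) - 1)))) = 0 := by
    refine circleIntegral.integral_eq_zero_of_hasDerivWithinAt (f := fun z => g z * z ^ (-(n:ℤ))) hr0.le fun z hz => ?_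
    have hz0 := hzne z hz
    have hzball := hsphere hz
    have hgd : HasDerivAt g (deriv g z) z :=
      (hg.differentiableAt (isOpen_ball.mem_nhds hzball)).hasDerivAt
    have hzp : HasDerivAt (fun w : ℂ => w ^ (-(n:ℤ))) (((-(n:ℤ) : ℤ) : ℂ) * z ^ (-(n:ℤ) - 1)) z :=
      hasDerivAt_zpow (-(n:ℤ)) z (Or.inl hz0)
    have := hgd.mul hzp
    have heq : deriv g z * z ^ (-(n:ℤ)) - (n:ℂ) * (g z * z ^ (-(n:ℤ) - 1))
        = deriv g z * z ^ (-(n:ℤ)) + g z * (((-(n:ℤ) : ℤ) : ℂ) * z ^ (-(n:ℤ) - 1)) := by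
      push_cast
      ring
    rw [heq]
    exact this.hasDerivWithinAt
  have hsub := circleIntegral.integral_sub hInt1 hInt2
  rw [hparts] at hsub
  have hLHS : (∮ z in C((0:ℂ), r), deriv g z * z ^ (-(n:ℤ)))
      = (n:ℂ) * ∮ z in C((0:ℂ), r), g z * z ^ (-(n:ℤ) - 1) := by
    have h0 : (∮ z in C((0:ℂ), r), deriv g z * z ^ (-(n:ℤ)))
        = ∮ z in C((0:ℂ), r), (n:ℂ) * (g z * z ^ (-(n:ℤ) - 1)) := by
      have := sub_eq_zero.mp hsub.symm
      linear_combination this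
    rw [h0, circleIntegral.integral_const_mul]
  have hgcoeff : (∮ z in C((0:ℂ), r), g z * z ^ (-(n:ℤ) - 1)) = (2 * π * I) * gc n :=
    circleInt_coeff hgc (fun s hs0 hs1 => summable_aux hgc hs0 hs1) hr0 hr1 n
  have hfinal : (2 * π * I) * ((n:ℂ) * gc n)
      = (2 * π * I) * ∑ kl ∈ Finset.HasAntidiagonal.antidiagonal n, qc kl.1 * gc kl.2 := by
    rw [← hRHS, hcongr1, hLHS, hgcoeff]
    ring
  have h2πI : (2 * π * I : ℂ) ≠ 0 := by
    simp [Real.pi_ne_zero, Complex.I_ne_zero]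
  exact mul_left_cancel₀ h2πI hfinal

lemma caratheodory_bound_r {q : ℂ → ℂ} {qc : ℕ → ℂ}
    (hq : DifferentiableOn ℂ q (ball 0 1))
    (hqc : ∀ z ∈ ball (0:ℂ) 1, HasSum (fun n => qc n * z ^ n) (q z))
    (hqre : ∀ z ∈ ball (0:ℂ) 1, 0 < (q z).re)
    (hq0 : q 0 = 1) {n : ℕ} (hn : 1 ≤ n) {r : ℝ} (hr0 : 0 < r) (hr1 : r < 1) :
    ‖qc n‖ * r ^ n ≤ 2 := by
  have h2π : (0:ℝ) ≤ 2 * π := by positivity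
  set cm : ℝ → ℂ := circleMap 0 r with hcm
  have hcmem : ∀ θ, cm θ ∈ ball (0:ℂ) 1 := by
    intro θ
    simp [hcm, Complex.dist_eq, norm_circleMap_zero, abs_of_pos hr0, hr1, mem_ball]
  have hcnorm : ∀ θ, ‖cm θ‖ = r := by
    intro θ; simp [hcm, norm_circleMap_zero, abs_of_pos hr0]
  have hcne : ∀ θ, cm θ ≠ 0 := fun θ h0 => by
    have := hcnorm θ; rw [h0] at this; simp at this; linarith
  have hqcm : Continuous fun θ => q (cm θ) :=
    hq.continuousOn.comp_continuous (continuous_circleMap 0 r) hcmem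
  have hcmcont : Continuous cm := continuous_circleMap 0 r
  have hzcont : ∀ j : ℤ, Continuous fun θ => cm θ ^ j :=
    fun j => hcmcont.zpow₀ j fun θ => Or.inl (hcne θ)
  have hsum : ∀ s : ℝ, 0 ≤ s → s < 1 → Summable (fun k => ‖qc k‖ * s ^ k) :=
    fun s hs0 hs1 => summable_aux hqc hs0 hs1
  set J : ℤ → ℂ := fun j => ∫ θ in Set.Ioc (0:ℝ) (2*π), q (cm θ) * cm θ ^ j with hJdef
  have hJint : ∀ j : ℤ, IntegrableOn (fun θ => q (cm θ) * cm θ ^ j) (Set.Ioc (0:ℝ) (2*π)) := by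
    intro j
    exact (hqcm.mul (hzcont j)).integrableOn_Ioc
  -- circle integral to J
  have hoint : ∀ m : ℤ, (∮ z in C((0:ℂ), r), q z * z ^ (m - 1)) = I * J m := by
    intro m
    rw [circleIntegral, intervalIntegral.integral_of_le h2π, hJdef, ← MeasureTheory.integral_const_mul]
    refine MeasureTheory.setIntegral_congr_fun measurableSet_Ioc fun θ _ => ?_
    simp only [deriv_circleMap, smul_eq_mul]
    have : cm θ ^ (m - 1) * cm θ = cm θ ^ m := by
      rw [show m = (m-1) + 1 by ring, zpow_add₀ (hcne θ), zpow_one]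
      ring_nf
    calc circleMap 0 r θ * I * (q (circleMap 0 r θ) * circleMap 0 r θ ^ (m - 1))
        = I * (q (cm θ) * (cm θ ^ (m-1) * cm θ)) := by rw [hcm]; ring
    _ = I * (q (cm θ) * cm θ ^ m) := by rw [this]
  have hJneg : ∀ m : ℕ, J (-(m:ℤ)) = 2 * π * qc m := by
    intro m
    have E1 := circleInt_coeff hqc hsum hr0 hr1 m
    rw [hoint (-(m:ℤ))] at E1
    have hI : (I : ℂ) ≠ 0 := I_ne_zero
    have h2 : I * J (-(m:ℤ)) = I * (2 * π * qc m) := by rw [E1]; ring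
    exact mul_left_cancel₀ hI h2
  have hJn : J (n:ℤ) = 0 := by
    have E2 := circleInt_coeff_zero hqc hsum hr0 hr1 (n - 1)
    have h1 : ((n - 1 : ℕ) : ℤ) = (n : ℤ) - 1 := by omega
    rw [h1] at E2
    rw [hoint (n:ℤ)] at E2
    exact (mul_eq_zero.mp E2).resolve_left I_ne_zero
  -- conjugate integral
  set Jc : ℂ := ∫ θ in Set.Ioc (0:ℝ) (2*π), (starRingEnd ℂ) (q (cm θ)) * cm θ ^ (-(n:ℤ)) with hJc
  have hJc0 : Jc = 0 := by
    have hconj : (starRingEnd ℂ) (J (n:ℤ)) = (r:ℂ) ^ (2*n) * Jc := by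
      rw [hJdef, ← _root_.integral_conj, hJc, ← MeasureTheory.integral_const_mul]
      refine MeasureTheory.setIntegral_congr_fun measurableSet_Ioc fun θ _ => ?_
      simp only [map_mul, map_zpow₀]
      have hcc : (starRingEnd ℂ) (cm θ) = (r:ℂ)^2 * (cm θ)⁻¹ := by
        have := Complex.mul_conj (cm θ)
        rw [Complex.normSq_eq_norm_sq, hcnorm] at this
        have h3 : (starRingEnd ℂ) (cm θ) * cm θ = ((r:ℂ)^2 * (cm θ)⁻¹) * cm θ := by
          rw [mul_assoc, inv_mul_cancel₀ (hcne θ), mul_one]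
          rw [mul_comm ((starRingEnd ℂ) (cm θ)) (cm θ), this]
          push_cast
          ring
        exact mul_right_cancel₀ (hcne θ) h3
      rw [hcc, mul_zpow, inv_zpow', zpow_natCast ((r:ℂ)^2), ← pow_mul]
      ring
    rw [hJn, map_zero] at hconj
    have hr2 : ((r:ℂ)) ^ (2*n) ≠ 0 := by
      apply pow_ne_zero
      exact_mod_cast hr0.ne'
    exact (mul_eq_zero.mp hconj.symm).resolve_left hr2
  -- sum is the real-part integral
  have hqc0 : qc 0 = 1 := by rw [rep_coeff_zero hqc, hq0]
  have hJ0 : J 0 = 2 * π := by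
    have := hJneg 0
    simpa [hqc0] using this
  have hkey : J (-(n:ℤ)) + Jc = ∫ θ in Set.Ioc (0:ℝ) (2*π),
      (2 * ((q (cm θ)).re : ℂ)) * cm θ ^ (-(n:ℤ)) := by
    rw [hJdef, hJc, ← MeasureTheory.integral_add (hJint _)]
    · refine MeasureTheory.setIntegral_congr_fun measurableSet_Ioc fun θ _ => ?_
      have := Complex.add_conj (q (cm θ))
      calc q (cm θ) * cm θ ^ (-(n:ℤ)) + (starRingEnd ℂ) (q (cm θ)) * cm θ ^ (-(n:ℤ))
          = (q (cm θ) + (starRingEnd ℂ) (q (cm θ))) * cm θ ^ (-(n:ℤ)) := by ring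
      _ = (2 * ((q (cm θ)).re : ℂ)) * cm θ ^ (-(n:ℤ)) := by rw [this]; push_cast; ring
    · have : Continuous fun θ => (starRingEnd ℂ) (q (cm θ)) := Complex.continuous_conj.comp hqcm
      exact (this.mul (hzcont _)).integrableOn_Ioc
  -- norm bound
  have hre_int : (∫ θ in Set.Ioc (0:ℝ) (2*π), (q (cm θ)).re) = 2 * π := by
    have hint : IntegrableOn (fun θ => q (cm θ)) (Set.Ioc (0:ℝ) (2*π)) volume :=
      hqcm.integrableOn_Ioc
    have := _root_.integral_re hint
    have hJ0' : (∫ θ in Set.Ioc (0:ℝ) (2*π), q (cm θ)) = 2 * π := by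
      have h00 := hJ0
      rw [hJdef] at h00
      simpa using h00
    rw [hJ0'] at this
    simpa using this
  have hnorm_bound : ‖J (-(n:ℤ)) + Jc‖ ≤ 2 * r ^ (-(n:ℤ)) * (2 * π) := by
    rw [hkey]
    have hb : ∀ θ ∈ Set.Ioc (0:ℝ) (2*π),
        ‖(2 * ((q (cm θ)).re : ℂ)) * cm θ ^ (-(n:ℤ))‖ = 2 * r ^ (-(n:ℤ)) * (q (cm θ)).re := by
      intro θ _
      rw [norm_mul, norm_zpow, hcnorm, norm_mul]
      have : ‖((q (cm θ)).re : ℂ)‖ = (q (cm θ)).re := by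
        rw [Complex.norm_real, Real.norm_eq_abs, abs_of_pos (hqre _ (hcmem θ))]
      rw [this]
      simp
      ring
    calc ‖∫ θ in Set.Ioc (0:ℝ) (2*π), (2 * ((q (cm θ)).re : ℂ)) * cm θ ^ (-(n:ℤ))‖
        ≤ ∫ θ in Set.Ioc (0:ℝ) (2*π), ‖(2 * ((q (cm θ)).re : ℂ)) * cm θ ^ (-(n:ℤ))‖ :=
          MeasureTheory.norm_integral_le_integral_norm _
    _ = ∫ θ in Set.Ioc (0:ℝ) (2*π), 2 * r ^ (-(n:ℤ)) * (q (cm θ)).re :=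
          MeasureTheory.setIntegral_congr_fun measurableSet_Ioc hb
    _ = 2 * r ^ (-(n:ℤ)) * ∫ θ in Set.Ioc (0:ℝ) (2*π), (q (cm θ)).re := MeasureTheory.integral_const_mul _ _
    _ = 2 * r ^ (-(n:ℤ)) * (2 * π) := by rw [hre_int]
  rw [hJneg n, hJc0, add_zero] at hnorm_bound
  have hval : ‖(2 * π * qc n : ℂ)‖ = 2 * π * ‖qc n‖ := by
    rw [norm_mul, norm_mul]
    simp [Real.pi_nonneg, _root_.abs_of_nonneg]
  rw [hval] at hnorm_bound
  have hπ : (0:ℝ) < π := Real.pi_pos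
  have hrn : (0:ℝ) < r ^ n := by positivity
  have hzr : r ^ (-(n:ℤ)) = (r ^ n)⁻¹ := by
    rw [zpow_neg, zpow_natCast]
  rw [hzr] at hnorm_bound
  rw [show (2:ℝ) * (r^n)⁻¹ * (2*π) = (2 * π) * (2 * (r^n)⁻¹) by ring] at hnorm_bound
  have := le_of_mul_le_mul_left (by linarith [hnorm_bound] : (2*π) * ‖qc n‖ ≤ (2*π) * (2 * (r^n)⁻¹)) (by positivity : (0:ℝ) < 2*π)
  calc ‖qc n‖ * r ^ n ≤ (2 * (r^n)⁻¹) * r ^ n := by nlinarith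
  _ = 2 := by field_simp

lemma caratheodory {q : ℂ → ℂ} {qc : ℕ → ℂ}
    (hq : DifferentiableOn ℂ q (ball 0 1))
    (hqc : ∀ z ∈ ball (0:ℂ) 1, HasSum (fun n => qc n * z ^ n) (q z))
    (hqre : ∀ z ∈ ball (0:ℂ) 1, 0 < (q z).re)
    (hq0 : q 0 = 1) {n : ℕ} (hn : 1 ≤ n) : ‖qc n‖ ≤ 2 := by
  haveI hNB : (nhdsWithin (1:ℝ) (Set.Ioo 0 1)).NeBot := by
    apply mem_closure_iff_nhdsWithin_neBot.mp
    rw [closure_Ioo (by norm_num : (0:ℝ) ≠ 1)]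
    exact ⟨by norm_num, le_refl 1⟩
  have htend : Filter.Tendsto (fun r : ℝ => ‖qc n‖ * r ^ n)
      (nhdsWithin 1 (Set.Ioo 0 1)) (nhds (‖qc n‖ * 1 ^ n)) := by
    apply Filter.Tendsto.mono_left _ nhdsWithin_le_nhds
    exact (continuous_const.mul (continuous_pow n)).tendsto 1
  have hev : ∀ᶠ r in nhdsWithin (1:ℝ) (Set.Ioo 0 1), ‖qc n‖ * r ^ n ≤ 2 := by
    filter_upwards [eventually_mem_nhdsWithin] with r hr
    exact caratheodory_bound_r hq hqc hqre hq0 hn hr.1 hr.2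
  have := le_of_tendsto htend hev
  simpa using this


theorem starlike_coeff_bound (g q : ℂ → ℂ) (gc : ℕ → ℂ)
    (hg : DifferentiableOn ℂ g (ball 0 1))
    (hinj : Set.InjOn g (ball 0 1))
    (hg0 : g 0 = 0) (hg'0 : deriv g 0 = 1)
    (hgc : ∀ z ∈ ball (0:ℂ) 1, HasSum (fun n => gc n * z ^ n) (g z))
    (hgc1 : gc 1 = 1)
    (hq : DifferentiableOn ℂ q (ball 0 1))
    (hqre : ∀ z ∈ ball (0:ℂ) 1, 0 < (q z).re)
    (hq0 : q 0 = 1)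
    (hstar : ∀ z ∈ ball (0:ℂ) 1, z * deriv g z = q z * g z) :
    ∀ n, 2 ≤ n → ‖gc n‖ ≤ n := by
  obtain ⟨qc, hqcrep⟩ := exists_rep hq
  have hgc0 : gc 0 = 0 := by rw [rep_coeff_zero hgc, hg0]
  have hqc0 : qc 0 = 1 := by rw [rep_coeff_zero hqcrep, hq0]
  have hqbd : ∀ m, 1 ≤ m → ‖qc m‖ ≤ 2 :=
    fun m hm => caratheodory hq hqcrep hqre hq0 hm
  have hrec := coeff_recursion hg hgc hqcrep hstar
  have main : ∀ k, 1 ≤ k → ‖gc k‖ ≤ k := by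
    intro k
    induction k using Nat.strong_induction_on with
    | _ k ih =>
      intro h1
      rcases eq_or_lt_of_le h1 with h | h
      · rw [← h]; simp [hgc1]
      · have hk2 : 2 ≤ k := h
        have heq := hrec k
        rw [Finset.Nat.sum_antidiagonal_eq_sum_range_succ_mk, Finset.sum_range_succ'] at heq
        simp only [hqc0, Nat.sub_zero, one_mul] at heq
        have heq2 : ((k:ℂ) - 1) * gc k = ∑ i ∈ Finset.range k, qc (i+1) * gc (k - (i+1)) := by
          linear_combination heq
        have hnormL : ‖((k:ℂ) - 1) * gc k‖ = ((k:ℝ) - 1) * ‖gc k‖ := by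
          rw [norm_mul]
          congr 1
          have hc : ((k:ℂ) - 1) = (((k:ℝ) - 1 : ℝ) : ℂ) := by push_cast; ring
          rw [hc, Complex.norm_real, Real.norm_eq_abs, _root_.abs_of_nonneg (by
            have : (1:ℝ) ≤ (k:ℝ) := by exact_mod_cast h1
            linarith)]
        have hbound : ‖∑ i ∈ Finset.range k, qc (i+1) * gc (k - (i+1))‖
            ≤ ∑ i ∈ Finset.range k, 2 * ((k - (i+1) : ℕ) : ℝ) := by
          refine (norm_sum_le _ _).trans (Finset.sum_le_sum fun i hi => ?_)
          rw [norm_mul]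
          have h2 : ‖qc (i+1)‖ ≤ 2 := hqbd (i+1) (by omega)
          have hgb : ‖gc (k - (i+1))‖ ≤ ((k - (i+1) : ℕ) : ℝ) := by
            rcases Nat.eq_zero_or_pos (k - (i+1)) with h0 | hpos
            · rw [h0]; simp [hgc0]
            · rw [Finset.mem_range] at hi
              exact ih (k - (i+1)) (by omega) (by omega)
          exact mul_le_mul h2 hgb (norm_nonneg _) (by norm_num)
        have hreflect : (∑ i ∈ Finset.range k, 2 * ((k - (i+1) : ℕ) : ℝ))
            = ∑ j ∈ Finset.range k, 2 * (j : ℝ) := by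
          rw [← Finset.sum_range_reflect (fun j => 2 * (j:ℝ)) k]
          refine Finset.sum_congr rfl fun i hi => ?_
          rw [Finset.mem_range] at hi
          congr 2
          omega
        have hgauss : (∑ j ∈ Finset.range k, 2 * (j : ℝ)) = (k:ℝ) * ((k:ℝ) - 1) := by
          rw [← Finset.mul_sum]
          have hnat := Finset.sum_range_id_mul_two k
          have hcast : ((∑ i ∈ Finset.range k, i : ℕ) : ℝ) * 2 = (k:ℝ) * ((k:ℝ) - 1) := by
            rw [show ((∑ i ∈ Finset.range k, i : ℕ) : ℝ) * 2 = (((∑ i ∈ Finset.range k, i) * 2 : ℕ) : ℝ) by push_cast; ring, hnat]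
            push_cast [Nat.cast_sub (by omega : 1 ≤ k)]
            ring
          rw [show ((∑ i ∈ Finset.range k, i : ℕ) : ℝ) = ∑ i ∈ Finset.range k, (i:ℝ) by push_cast; rfl] at hcast
          linarith
        have hineq : ((k:ℝ) - 1) * ‖gc k‖ ≤ (k:ℝ) * ((k:ℝ) - 1) := by
          rw [← hnormL, heq2]
          calc ‖∑ i ∈ Finset.range k, qc (i+1) * gc (k - (i+1))‖
              ≤ ∑ i ∈ Finset.range k, 2 * ((k - (i+1) : ℕ) : ℝ) := hbound
          _ = (k:ℝ) * ((k:ℝ) - 1) := by rw [hreflect, hgauss]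
        have hkR : (2:ℝ) ≤ (k:ℝ) := by exact_mod_cast hk2
        nlinarith [norm_nonneg (gc k)]
  intro n hn
  exact main n (by omega)
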